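/- arXiv:2001.07482 — 3 statements merged into one kernel-verified Lean document; each statement's English description precedes it below -/
import Mathlib

section
/- Let $(u_j)$ and $(v_j)$ be non-increasing sequences of positive real numbers. If $\prod_{j=1}^n u_j \le \prod_{j=1}^n v_j$ for all $n \ge 1$, then for every $p > 0$ and every $n \ge 1$, $\sum_{j=1}^n u_j^p \le \sum_{j=1}^n v_j^p$. -/
/-- Abel-type lemma: antitone nonneg weights, nonpositive partial sums. -/
lemma abel_neg (d : ℕ → ℝ) (hd : ∀ k, ∑ j ∈ Finset.range k, d j ≤ 0) :
    ∀ n, ∀ w : ℕ → ℝ, Antitone w → (∀ j, 0 ≤ w j) →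
      ∑ j ∈ Finset.range n, w j * d j ≤ 0 := by
  intro n
  induction n with
  | zero => simp
  | succ m ih =>
    intro w hw hw0
    have key : ∑ j ∈ Finset.range (m+1), w j * d j
        = ∑ j ∈ Finset.range (m+1), (w (min j m) - w m) * d j
          + w m * ∑ j ∈ Finset.range (m+1), d j := by
      rw [Finset.mul_sum, ← Finset.sum_add_distrib]
      apply Finset.sum_congr rfl
      intro j hj
      have : min j m = j := min_eq_left (Nat.lt_succ_iff.mp (Finset.mem_range.mp hj))
      rw [this]; ring
    rw [key]
    have h1 : ∑ j ∈ Finset.range (m+1), (w (min j m) - w m) * d j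
        = ∑ j ∈ Finset.range m, (w (min j m) - w m) * d j := by
      rw [Finset.sum_range_succ]; simp
    have h2 : ∑ j ∈ Finset.range m, (w (min j m) - w m) * d j ≤ 0 := by
      apply ih
      · intro a b hab
        simp only
        have := hw (min_le_min_right m hab)
        linarith
      · intro j
        have := hw (min_le_right j m)
        linarith
    have h3 : w m * ∑ j ∈ Finset.range (m+1), d j ≤ 0 :=
      mul_nonpos_of_nonneg_of_nonpos (hw0 m) (hd (m+1))
    rw [h1]; linarith

theorem stmt_1 (u v : ℕ → ℝ) (hu : Antitone u) (hv : Antitone v)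
    (hupos : ∀ j, 0 < u j) (hvpos : ∀ j, 0 < v j)
    (hlog : ∀ n, 1 ≤ n → ∏ j ∈ Finset.Icc 1 n, u j ≤ ∏ j ∈ Finset.Icc 1 n, v j) :
    ∀ p : ℝ, 0 < p → ∀ n, 1 ≤ n →
      ∑ j ∈ Finset.Icc 1 n, u j ^ p ≤ ∑ j ∈ Finset.Icc 1 n, v j ^ p := by
  intro p hp n hn
  set a : ℕ → ℝ := fun j => u (1 + j) with ha
  set b : ℕ → ℝ := fun j => v (1 + j) with hb
  have hIcc : ∀ f : ℕ → ℝ, ∀ m, ∑ j ∈ Finset.Icc 1 m, f j = ∑ j ∈ Finset.range m, f (1 + j) := by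
    intro f m
    rw [← Finset.Ico_add_one_right_eq_Icc, Finset.sum_Ico_eq_sum_range]
    simp
  have hIccP : ∀ f : ℕ → ℝ, ∀ m, ∏ j ∈ Finset.Icc 1 m, f j = ∏ j ∈ Finset.range m, f (1 + j) := by
    intro f m
    rw [← Finset.Ico_add_one_right_eq_Icc, Finset.prod_Ico_eq_prod_range]
    simp
  rw [hIcc, hIcc]
  -- partial sums of d := p*(log a - log b) are ≤ 0
  set d : ℕ → ℝ := fun j => Real.log (a j) - Real.log (b j) with hdd
  have hd : ∀ k, ∑ j ∈ Finset.range k, d j ≤ 0 := by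
    intro k
    rcases Nat.eq_zero_or_pos k with h | h
    · simp [h]
    · have hprod : ∏ j ∈ Finset.range k, a j ≤ ∏ j ∈ Finset.range k, b j := by
        rw [← hIccP, ← hIccP]; exact hlog k h
      have hpa : 0 < ∏ j ∈ Finset.range k, a j := Finset.prod_pos (fun j _ => hupos _)
      have hlog' := Real.log_le_log hpa hprod
      rw [Real.log_prod (fun j _ => (hupos _).ne'),
          Real.log_prod (fun j _ => (hvpos _).ne')] at hlog'
      have : ∑ j ∈ Finset.range k, d j
          = ∑ j ∈ Finset.range k, Real.log (a j) - ∑ j ∈ Finset.range k, Real.log (b j) := by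
        rw [Finset.sum_sub_distrib]
      linarith
  set w : ℕ → ℝ := fun j => p * a j ^ p with hww
  have hw0 : ∀ j, 0 ≤ w j := fun j =>
    mul_nonneg hp.le (Real.rpow_nonneg (hupos _).le p)
  have hwanti : Antitone w := by
    intro i j hij
    apply mul_le_mul_of_nonneg_left _ hp.le
    exact Real.rpow_le_rpow (hupos _).le (hu (by omega)) hp.le
  have habel := abel_neg d hd n w hwanti hw0
  -- pointwise tangent bound: a^p - b^p ≤ p a^p (log a - log b)
  have hpt : ∀ j, a j ^ p - b j ^ p ≤ w j * d j := by
    intro j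
    have hap : 0 < a j ^ p := Real.rpow_pos_of_pos (hupos _) p
    have hexp : 1 + p * (Real.log (b j) - Real.log (a j))
        ≤ Real.exp (p * (Real.log (b j) - Real.log (a j))) := by
      linarith [Real.add_one_le_exp (p * (Real.log (b j) - Real.log (a j)))]
    have hrw : Real.exp (p * (Real.log (b j) - Real.log (a j))) = b j ^ p / a j ^ p := by
      rw [mul_sub, Real.exp_sub, mul_comm p (Real.log (b j)), mul_comm p (Real.log (a j)),
        Real.exp_mul, Real.exp_mul, Real.exp_log (hvpos _), Real.exp_log (hupos _)]
    rw [hrw] at hexp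
    have := mul_le_mul_of_nonneg_left hexp hap.le
    rw [mul_div_cancel₀ _ hap.ne'] at this
    simp only [hww, hdd]
    nlinarith
  calc ∑ j ∈ Finset.range n, a j ^ p
      ≤ ∑ j ∈ Finset.range n, (b j ^ p + w j * d j) := by
        apply Finset.sum_le_sum; intro j _; linarith [hpt j]
    _ = ∑ j ∈ Finset.range n, b j ^ p + ∑ j ∈ Finset.range n, w j * d j := by
        rw [Finset.sum_add_distrib]
    _ ≤ ∑ j ∈ Finset.range n, b j ^ p := by linarith
end

section
/- Let $T$ be a compact operator on a separable complex Hilbert space $H$ with Schmidt decomposition $T = \sum_{j=1}^\infty s_j\, u_j \otimes v_j$, where $s_1 \ge s_2 \ge \cdots \ge 0$ are the singular numbers of $T$. Then for every $n \ge 1$, $s_1 \cdots s_n = \max |\det(\langle T f_j, g_i\rangle)_{1 \le i,j \le n}|$, where the maximum is taken over all pairs $(f_j)_{1 \le j \le n}$, $(g_i)_{1 \le i \le n}$ of orthonormal systems of length $n$ in $H$. -/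
open scoped InnerProductSpace

open Finset Matrix

private lemma strictMono_eq_of_image_eq {n N : ℕ} {m m' : Fin n → Fin N} (hm : StrictMono m)
    (hm' : StrictMono m') (h : Finset.image m Finset.univ = Finset.image m' Finset.univ) :
    m = m' := by
  have hc : (Finset.image m Finset.univ).card = n := by
    rw [Finset.card_image_of_injective _ hm.injective, Finset.card_univ, Fintype.card_fin]
  have h1 := Finset.orderEmbOfFin_unique hc (f := m)
    (fun i => Finset.mem_image_of_mem _ (Finset.mem_univ i)) hm
  have h2 := Finset.orderEmbOfFin_unique hc (f := m')
    (fun i => by rw [h]; exact Finset.mem_image_of_mem _ (Finset.mem_univ i)) hm'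
  rw [h1, h2]

private lemma strictMono_fin_le {n N : ℕ} {m : Fin n → Fin N} (hm : StrictMono m) (i : Fin n) :
    (i : ℕ) ≤ (m i : ℕ) := by
  have key : ∀ t : ℕ, ∀ i : Fin n, (i : ℕ) = t → t ≤ (m i : ℕ) := by
    intro t
    induction t with
    | zero => intro i _; exact Nat.zero_le _
    | succ t ih =>
      intro i hi
      have ht : t < n := by omega
      set j : Fin n := ⟨t, ht⟩ with hj
      have hji : j < i := by rw [Fin.lt_def]; simp [hj]; omega
      have h1 : t ≤ (m j : ℕ) := ih j rfl
      have h2 : (m j : ℕ) < (m i : ℕ) := hm hji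
      omega
  exact key (i : ℕ) i rfl
lemma cauchy_binet_weighted (n N : ℕ) (w : Fin N → ℂ) (B : Matrix (Fin n) (Fin N) ℂ)
    (C : Matrix (Fin N) (Fin n) ℂ) :
    Matrix.det (Matrix.of fun i j => ∑ k, w k * B i k * C k j)
    = ∑ m ∈ Finset.univ.filter (fun m : Fin n → Fin N => StrictMono m),
        (∏ i, w (m i)) * (Matrix.det (B.submatrix id m) * Matrix.det (C.submatrix m id)) := by
  classical
  -- Step A: expand by multilinearity in the rows
  have stepA : Matrix.det (Matrix.of fun i j => ∑ k, w k * B i k * C k j)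
      = ∑ r : Fin n → Fin N, (∏ i, (w (r i) * B i (r i))) * Matrix.det (C.submatrix r id) := by
    have h1 : (Matrix.of fun i j => ∑ k, w k * B i k * C k j)
        = fun i => ∑ k : Fin N, (w k * B i k) • C k := by
      ext i j; simp [Finset.sum_apply, mul_assoc]
    have h2 := (Matrix.detRowAlternating :
        ((Fin n → ℂ) [⋀^Fin n]→ₗ[ℂ] ℂ)).toMultilinearMap.map_sum
        (g := fun i k => (w k * B i k) • C k)
    rw [AlternatingMap.coe_multilinearMap] at h2
    rw [Matrix.det, h1, h2]
    refine Finset.sum_congr rfl fun r _ => ?_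
    have h3 := (Matrix.detRowAlternating :
        ((Fin n → ℂ) [⋀^Fin n]→ₗ[ℂ] ℂ)).toMultilinearMap.map_smul_univ
        (fun i => w (r i) * B i (r i)) (fun i => C (r i))
    rw [AlternatingMap.coe_multilinearMap] at h3
    rw [h3, smul_eq_mul]
    rfl
  rw [stepA]
  -- Step B: only injective r contribute
  rw [← Finset.sum_filter_add_sum_filter_not Finset.univ (fun r : Fin n → Fin N =>
    Function.Injective r)]
  have hzero : ∑ r ∈ Finset.univ.filter (fun r : Fin n → Fin N => ¬ Function.Injective r),
      (∏ i, (w (r i) * B i (r i))) * Matrix.det (C.submatrix r id) = 0 := by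
    refine Finset.sum_eq_zero fun r hr => ?_
    obtain ⟨a, b, hab, hne⟩ := Function.not_injective_iff.mp (Finset.mem_filter.mp hr).2
    have : Matrix.det (C.submatrix r id) = 0 :=
      Matrix.det_zero_of_row_eq hne (by funext j; simp [Matrix.submatrix_apply, hab])
    rw [this, mul_zero]
  rw [hzero, add_zero]
  -- Step C: reparametrize injective maps by (strictly monotone map, permutation)
  have stepC : ∑ r ∈ Finset.univ.filter (fun r : Fin n → Fin N => Function.Injective r),
      (∏ i, (w (r i) * B i (r i))) * Matrix.det (C.submatrix r id)
      = ∑ p ∈ (Finset.univ.filter (fun m : Fin n → Fin N => StrictMono m)) ×ˢ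
          (Finset.univ : Finset (Equiv.Perm (Fin n))),
        (∏ i, (w ((p.1 ∘ p.2) i) * B i ((p.1 ∘ p.2) i))) *
          Matrix.det (C.submatrix (p.1 ∘ p.2) id) := by
    refine (Finset.sum_bij (fun p _ => p.1 ∘ p.2) ?_ ?_ ?_ ?_).symm
    · rintro ⟨m, σ⟩ hp
      have hm : StrictMono m := (Finset.mem_filter.mp (Finset.mem_product.mp hp).1).2
      exact Finset.mem_filter.mpr ⟨Finset.mem_univ _, hm.injective.comp σ.injective⟩
    · rintro ⟨m, σ⟩ hp ⟨m', σ'⟩ hp' h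
      have h' : m ∘ ⇑σ = m' ∘ ⇑σ' := h
      have hm : StrictMono m := (Finset.mem_filter.mp (Finset.mem_product.mp hp).1).2
      have hm' : StrictMono m' := (Finset.mem_filter.mp (Finset.mem_product.mp hp').1).2
      have himg : Finset.image m Finset.univ = Finset.image m' Finset.univ := by
        have h1 : Finset.image (m ∘ σ) Finset.univ = Finset.image m Finset.univ := by
          rw [← Finset.image_image]; congr 1
          exact Finset.image_univ_equiv σ
        have h2 : Finset.image (m' ∘ σ') Finset.univ = Finset.image m' Finset.univ := by
          rw [← Finset.image_image]; congr 1
          exact Finset.image_univ_equiv σ'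
        rw [← h1, ← h2, h']
      have hmm : m = m' := strictMono_eq_of_image_eq hm hm' himg
      subst hmm
      have hσ : σ = σ' :=
        Equiv.coe_fn_injective (funext fun i => hm.injective (congrFun h' i))
      rw [hσ]
    · -- surjectivity
      intro r hr
      have hrinj : Function.Injective r := (Finset.mem_filter.mp hr).2
      set K := Finset.image r Finset.univ with hK
      have hc : K.card = n := by
        rw [hK, Finset.card_image_of_injective _ hrinj, Finset.card_univ, Fintype.card_fin]
      set m : Fin n → Fin N := fun i => K.orderEmbOfFin hc i with hmdef
      have hm : StrictMono m := (K.orderEmbOfFin hc).strictMono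
      have hrK : ∀ i, r i ∈ K := fun i => Finset.mem_image_of_mem _ (Finset.mem_univ i)
      set r' : Fin n → K := fun i => ⟨r i, hrK i⟩ with hr'
      have hr'bij : Function.Bijective r' := by
        rw [Fintype.bijective_iff_injective_and_card]
        constructor
        · intro a b hab
          exact hrinj (congrArg Subtype.val hab)
        · rw [Fintype.card_coe, hc, Fintype.card_fin]
      set σ : Equiv.Perm (Fin n) :=
        (Equiv.ofBijective r' hr'bij).trans (K.orderIsoOfFin hc).toEquiv.symm with hσdef
      refine ⟨(m, σ), ?_, ?_⟩
      · exact Finset.mem_product.mpr ⟨Finset.mem_filter.mpr ⟨Finset.mem_univ _, hm⟩,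
          Finset.mem_univ _⟩
      · funext i
        show m (σ i) = r i
        have h5 : m (σ i)
            = ((K.orderIsoOfFin hc).toEquiv ((K.orderIsoOfFin hc).toEquiv.symm (r' i)) : _) :=
          rfl
        rw [h5, Equiv.apply_symm_apply]
    · rintro ⟨m, σ⟩ hp
      rfl
  rw [stepC, Finset.sum_product]
  refine Finset.sum_congr rfl fun m hmem => ?_
  have hm : StrictMono m := (Finset.mem_filter.mp hmem).2
  have hperm : ∀ σ : Equiv.Perm (Fin n),
      (∏ i, (w ((m ∘ σ) i) * B i ((m ∘ σ) i))) * Matrix.det (C.submatrix (m ∘ σ) id)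
      = (∏ i, w (m i)) * ((((Equiv.Perm.sign σ : ℤ) : ℂ) * ∏ i, B i (m (σ i)))
          * Matrix.det (C.submatrix m id)) := by
    intro σ
    have h1 : (∏ i, (w ((m ∘ σ) i) * B i ((m ∘ σ) i)))
        = (∏ i, w (m i)) * ∏ i, B i (m (σ i)) := by
      rw [Finset.prod_mul_distrib]
      congr 1
      exact Equiv.prod_comp σ (fun i => w (m i))
    have h2 : C.submatrix (m ∘ σ) id = (C.submatrix m id).submatrix σ id := by
      ext i j; simp
    rw [h1, h2, Matrix.det_permute]
    push_cast
    ring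
  simp only [hperm]
  rw [← Finset.mul_sum]
  congr 1
  have hdet : Matrix.det (B.submatrix id m)
      = ∑ σ : Equiv.Perm (Fin n), ((Equiv.Perm.sign σ : ℤ) : ℂ) * ∏ i, B i (m (σ i)) := by
    rw [Matrix.det_apply']
    refine Fintype.sum_equiv (Equiv.inv (Equiv.Perm (Fin n))) _ _ (fun σ => ?_)
    simp only [Matrix.submatrix_apply, id_eq, Equiv.inv_apply]
    have hp := Equiv.prod_comp σ⁻¹ (fun i => B (σ i) (m i))
    simp only [show ∀ i, σ (σ⁻¹ i) = i from fun i => σ.apply_symm_apply i] at hp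
    rw [← hp, Equiv.Perm.sign_inv]
  rw [hdet, Finset.sum_mul]
lemma sum_normSq_det_le_one {n N : ℕ} (B : Matrix (Fin n) (Fin N) ℂ)
    (hB : ∀ x : Fin n → ℂ, ∑ k, Complex.normSq (Matrix.mulVec Bᴴ x k)
       ≤ ∑ i, Complex.normSq (x i)) :
    ∑ m ∈ Finset.univ.filter (fun m : Fin n → Fin N => StrictMono m),
      Complex.normSq (Matrix.det (B.submatrix id m)) ≤ 1 := by
  classical
  have h1 : (Matrix.of fun i j => ∑ k, (fun _ : Fin N => (1:ℂ)) k * B i k * Bᴴ k j) = B * Bᴴ := by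
    ext i j; simp [Matrix.mul_apply]
  have hCB := cauchy_binet_weighted n N (fun _ => 1) B Bᴴ
  rw [h1] at hCB
  have h2 : ∀ m : Fin n → Fin N,
      Matrix.det (Bᴴ.submatrix m id) = star (Matrix.det (B.submatrix id m)) := by
    intro m
    have : Bᴴ.submatrix m id = (B.submatrix id m)ᴴ := by
      ext k j; simp [Matrix.conjTranspose_apply]
    rw [this, Matrix.det_conjTranspose]
  have hsum : Matrix.det (B * Bᴴ)
      = ((∑ m ∈ Finset.univ.filter (fun m : Fin n → Fin N => StrictMono m),
          Complex.normSq (Matrix.det (B.submatrix id m)) : ℝ) : ℂ) := by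
    rw [hCB]
    push_cast
    refine Finset.sum_congr rfl fun m _ => ?_
    rw [h2 m]
    simp only [Finset.prod_const_one, one_mul]
    rw [Complex.star_def, Complex.mul_conj]
  have hG : (B * Bᴴ).IsHermitian := Matrix.isHermitian_mul_conjTranspose_self B
  have main : ∀ x : Fin n → ℂ, RCLike.re (dotProduct (star x) ((B * Bᴴ) *ᵥ x))
      ≤ ∑ j, Complex.normSq (x j) := by
    intro x
    set y : Fin N → ℂ := Matrix.mulVec Bᴴ x with hy
    have h6 : star y = star x ᵥ* B := by
      rw [hy, Matrix.star_mulVec, Matrix.conjTranspose_conjTranspose]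
    have hdot : dotProduct (star x) ((B * Bᴴ) *ᵥ x)
        = dotProduct (star y) y := by
      rw [← Matrix.mulVec_mulVec, dotProduct_mulVec, ← h6]
    have hre : RCLike.re (dotProduct (star x) ((B * Bᴴ) *ᵥ x))
        = ∑ k, Complex.normSq (y k) := by
      rw [hdot]
      simp only [dotProduct, Pi.star_apply, Complex.star_def]
      rw [RCLike.re_to_complex, Complex.re_sum]
      refine Finset.sum_congr rfl fun k _ => ?_
      rw [mul_comm, Complex.mul_conj]
      simp
    rw [hre]
    exact hB x
  have heig : ∀ i, hG.eigenvalues i ≤ 1 := by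
    intro i
    have hnorm : ∑ j, Complex.normSq ((hG.eigenvectorBasis i) j) = 1 := by
      have h3 : ‖hG.eigenvectorBasis i‖ = 1 := hG.eigenvectorBasis.orthonormal.1 i
      have h4 := EuclideanSpace.norm_eq (hG.eigenvectorBasis i)
      rw [h3] at h4
      have h5 : ∑ j, ‖(hG.eigenvectorBasis i) j‖ ^ 2 = 1 := Real.sqrt_eq_one.mp h4.symm
      rw [← h5]
      refine Finset.sum_congr rfl fun j _ => ?_
      rw [Complex.normSq_eq_norm_sq]
    calc hG.eigenvalues i
        = RCLike.re (dotProduct (star ⇑(hG.eigenvectorBasis i))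
            ((B * Bᴴ) *ᵥ ⇑(hG.eigenvectorBasis i))) := hG.eigenvalues_eq i
      _ ≤ ∑ j, Complex.normSq ((hG.eigenvectorBasis i) j) := main _
      _ = 1 := hnorm
  have hnonneg : ∀ i, 0 ≤ hG.eigenvalues i := fun i =>
    Matrix.eigenvalues_self_mul_conjTranspose_nonneg B i
  have hdet : Matrix.det (B * Bᴴ) = ((∏ i, hG.eigenvalues i : ℝ) : ℂ) := by
    rw [hG.det_eq_prod_eigenvalues]
    push_cast
    rfl
  have hprod : (∏ i, hG.eigenvalues i) ≤ 1 :=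
    Finset.prod_le_one (fun i _ => hnonneg i) (fun i _ => heig i)
  have hfin := hsum.symm.trans hdet
  rw [Complex.ofReal_inj] at hfin
  rw [hfin]
  exact hprod

theorem stmt_5 {H : Type*} [NormedAddCommGroup H] [InnerProductSpace ℂ H]
    [CompleteSpace H] [SecondCountableTopology H]
    (T : H →L[ℂ] H) (hT : IsCompactOperator ⇑T)
    (s : ℕ → ℝ) (hs_nonneg : ∀ j, 0 ≤ s j) (hs_anti : Antitone s)
    (hs_lim : Filter.Tendsto s Filter.atTop (nhds 0))
    (u v : ℕ → H) (hu : Orthonormal ℂ u) (hv : Orthonormal ℂ v)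
    (hSchmidt : ∀ x : H, T x = ∑' j : ℕ, (s j : ℂ) • (⟪v j, x⟫_ℂ • u j))
    (n : ℕ) (hn : 1 ≤ n) :
    IsGreatest
      {r : ℝ | ∃ f g : Fin n → H, Orthonormal ℂ f ∧ Orthonormal ℂ g ∧
        r = ‖Matrix.det (Matrix.of fun i j : Fin n => ⟪g i, T (f j)⟫_ℂ)‖}
      (∏ j ∈ Finset.range n, s j) := by
  classical
  constructor
  · -- membership: take f = v, g = u restricted to Fin n
    refine ⟨fun j => v (j : ℕ), fun i => u (i : ℕ),
      hv.comp Fin.val Fin.val_injective, hu.comp Fin.val Fin.val_injective, ?_⟩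
    have hTv : ∀ j : Fin n, T (v (j : ℕ)) = ((s (j : ℕ) : ℂ)) • u (j : ℕ) := by
      intro j
      rw [hSchmidt]
      rw [tsum_eq_single (j : ℕ) (fun k hk => by rw [hv.2 hk]; simp)]
      rw [orthonormal_iff_ite.mp hv (j : ℕ) (j : ℕ)]
      simp
    have hmat : (Matrix.of fun i j : Fin n => ⟪u (i : ℕ), T (v (j : ℕ))⟫_ℂ)
        = Matrix.diagonal (fun i : Fin n => (s (i : ℕ) : ℂ)) := by
      ext i j
      rw [Matrix.of_apply, hTv j, inner_smul_right, orthonormal_iff_ite.mp hu (i : ℕ) (j : ℕ)]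
      by_cases hij : i = j
      · subst hij; simp
      · have hne : (i : ℕ) ≠ (j : ℕ) := fun hc => hij (Fin.val_injective hc)
        rw [Matrix.diagonal_apply_ne _ hij]
        simp [hne]
    show (∏ j ∈ Finset.range n, s j)
        = ‖Matrix.det (Matrix.of fun i j : Fin n => ⟪u (i : ℕ), T (v (j : ℕ))⟫_ℂ)‖
    rw [hmat, Matrix.det_diagonal, norm_prod]
    rw [← Fin.prod_univ_eq_prod_range (fun j => s j) n]
    refine Finset.prod_congr rfl fun i _ => ?_
    rw [Complex.norm_real, Real.norm_eq_abs, abs_of_nonneg (hs_nonneg _)]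
  · -- upper bound
    rintro r ⟨f, g, hf, hg, rfl⟩
    set P := ∏ j ∈ Finset.range n, s j with hP
    have hPnonneg : 0 ≤ P := Finset.prod_nonneg fun j _ => hs_nonneg j
    have hentry : ∀ i j : Fin n,
        HasSum (fun k : ℕ => ((s k : ℂ) * ⟪v k, f j⟫_ℂ) * ⟪g i, u k⟫_ℂ) ⟪g i, T (f j)⟫_ℂ := by
      intro i j
      have hc : Summable (fun k : ℕ => ‖(s k : ℂ) * ⟪v k, f j⟫_ℂ‖ ^ 2) := by
        have hb := (hv.inner_products_summable (f j)).mul_left ((s 0) ^ 2)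
        refine Summable.of_nonneg_of_le (fun k => sq_nonneg _) (fun k => ?_) hb
        rw [norm_mul, mul_pow]
        have h1 : ‖(s k : ℂ)‖ ≤ s 0 := by
          rw [Complex.norm_real, Real.norm_eq_abs, abs_of_nonneg (hs_nonneg k)]
          exact hs_anti (Nat.zero_le k)
        have h2 : (0:ℝ) ≤ ‖⟪v k, f j⟫_ℂ‖ ^ 2 := sq_nonneg _
        have h3 : ‖(s k : ℂ)‖ ^ 2 ≤ (s 0) ^ 2 := by
          have := norm_nonneg ((s k : ℂ))
          nlinarith
        nlinarith
      have hsummable : Summable (fun k : ℕ => ((s k : ℂ) * ⟪v k, f j⟫_ℂ) • u k) := by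
        have := (hu.orthogonalFamily.summable_iff_norm_sq_summable
          (fun k => (s k : ℂ) * ⟪v k, f j⟫_ℂ)).mpr hc
        simpa [LinearIsometry.toSpanSingleton_apply] using this
      have hts : T (f j) = ∑' k, ((s k : ℂ) * ⟪v k, f j⟫_ℂ) • u k := by
        rw [hSchmidt]; exact tsum_congr fun k => smul_smul _ _ _
      have hasV : HasSum (fun k => ((s k : ℂ) * ⟪v k, f j⟫_ℂ) • u k) (T (f j)) := by
        rw [hts]; exact hsummable.hasSum
      have hmapped := hasV.mapL (innerSL ℂ (g i))
      simpa [inner_smul_right] using hmapped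
    set A : Matrix (Fin n) (Fin n) ℂ := Matrix.of fun i j : Fin n => ⟪g i, T (f j)⟫_ℂ with hA
    set M : ℕ → Matrix (Fin n) (Fin n) ℂ := fun N => Matrix.of fun i j =>
      ∑ k ∈ Finset.range N, ((s k : ℂ) * ⟪v k, f j⟫_ℂ) * ⟪g i, u k⟫_ℂ with hM
    have hbound : ∀ N, ‖(M N).det‖ ≤ P := by
      intro N
      set Bm : Matrix (Fin n) (Fin N) ℂ := Matrix.of fun i k => ⟪g i, u (k : ℕ)⟫_ℂ with hBm
      set Cm : Matrix (Fin N) (Fin n) ℂ := Matrix.of fun k j => ⟪v (k : ℕ), f j⟫_ℂ with hCm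
      have hMN : M N = Matrix.of fun i j =>
          ∑ k : Fin N, (fun k : Fin N => (s (k : ℕ) : ℂ)) k * Bm i k * Cm k j := by
        ext i j
        show ∑ k ∈ Finset.range N, ((s k : ℂ) * ⟪v k, f j⟫_ℂ) * ⟪g i, u k⟫_ℂ
          = ∑ k : Fin N, (s (k : ℕ) : ℂ) * Bm i k * Cm k j
        rw [← Fin.sum_univ_eq_sum_range
          (fun k => ((s k : ℂ) * ⟪v k, f j⟫_ℂ) * ⟪g i, u k⟫_ℂ) N]
        exact Finset.sum_congr rfl fun k _ => by rw [hBm, hCm]; simp only [Matrix.of_apply]; ring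
      -- Bessel bounds
      have hBcond : ∀ x : Fin n → ℂ, ∑ k, Complex.normSq (Matrix.mulVec Bmᴴ x k)
          ≤ ∑ i, Complex.normSq (x i) := by
        intro x
        set y : H := ∑ i, x i • g i with hy
        have h1 : ∀ k : Fin N, Matrix.mulVec Bmᴴ x k = ⟪u (k : ℕ), y⟫_ℂ := by
          intro k
          rw [hy, inner_sum]
          simp only [inner_smul_right]
          show ∑ i, star (Bm i k) * x i = _
          refine Finset.sum_congr rfl fun i _ => ?_
          rw [hBm]
          simp only [Matrix.of_apply, Complex.star_def, inner_conj_symm]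
          ring
        have hbes : ∑ k ∈ Finset.range N, ‖⟪u k, y⟫_ℂ‖ ^ 2 ≤ ‖y‖ ^ 2 :=
          hu.sum_inner_products_le y
        have hny : ‖y‖ ^ 2 = ∑ i, Complex.normSq (x i) := by
          have h2 := hg.inner_sum x x Finset.univ
          have h3 : ((‖y‖ : ℝ) : ℂ) ^ 2 = ⟪y, y⟫_ℂ := (inner_self_eq_norm_sq_to_K y).symm
          rw [hy] at h3 ⊢
          rw [h2] at h3
          have h4 := congrArg Complex.re h3
          simp only [Complex.re_sum] at h4
          rw [show ((‖∑ i, x i • g i‖ : ℝ) : ℂ) ^ 2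
              = ((‖∑ i, x i • g i‖ ^ 2 : ℝ) : ℂ) by push_cast; ring] at h4
          rw [Complex.ofReal_re] at h4
          rw [h4]
          refine Finset.sum_congr rfl fun i _ => ?_
          rw [mul_comm, Complex.mul_conj, Complex.ofReal_re]
        calc ∑ k : Fin N, Complex.normSq (Matrix.mulVec Bmᴴ x k)
            = ∑ k : Fin N, ‖⟪u (k : ℕ), y⟫_ℂ‖ ^ 2 := by
              refine Finset.sum_congr rfl fun k _ => ?_
              rw [h1 k, Complex.normSq_eq_norm_sq]
          _ = ∑ k ∈ Finset.range N, ‖⟪u k, y⟫_ℂ‖ ^ 2 :=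
              Fin.sum_univ_eq_sum_range (fun k => ‖⟪u k, y⟫_ℂ‖ ^ 2) N
          _ ≤ ‖y‖ ^ 2 := hbes
          _ = ∑ i, Complex.normSq (x i) := hny
      have hCcond : ∀ x : Fin n → ℂ, ∑ k, Complex.normSq (Matrix.mulVec (Cmᴴ)ᴴ x k)
          ≤ ∑ i, Complex.normSq (x i) := by
        intro x
        rw [Matrix.conjTranspose_conjTranspose]
        set y : H := ∑ j, x j • f j with hy
        have h1 : ∀ k : Fin N, Matrix.mulVec Cm x k = ⟪v (k : ℕ), y⟫_ℂ := by
          intro k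
          rw [hy, inner_sum]
          simp only [inner_smul_right]
          show ∑ j, Cm k j * x j = _
          refine Finset.sum_congr rfl fun j _ => ?_
          rw [hCm]
          simp only [Matrix.of_apply]
          ring
        have hbes : ∑ k ∈ Finset.range N, ‖⟪v k, y⟫_ℂ‖ ^ 2 ≤ ‖y‖ ^ 2 :=
          hv.sum_inner_products_le y
        have hny : ‖y‖ ^ 2 = ∑ i, Complex.normSq (x i) := by
          have h2 := hf.inner_sum x x Finset.univ
          have h3 : ((‖y‖ : ℝ) : ℂ) ^ 2 = ⟪y, y⟫_ℂ := (inner_self_eq_norm_sq_to_K y).symm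
          rw [hy] at h3 ⊢
          rw [h2] at h3
          have h4 := congrArg Complex.re h3
          simp only [Complex.re_sum] at h4
          rw [show ((‖∑ j, x j • f j‖ : ℝ) : ℂ) ^ 2
              = ((‖∑ j, x j • f j‖ ^ 2 : ℝ) : ℂ) by push_cast; ring] at h4
          rw [Complex.ofReal_re] at h4
          rw [h4]
          refine Finset.sum_congr rfl fun i _ => ?_
          rw [mul_comm, Complex.mul_conj, Complex.ofReal_re]
        calc ∑ k : Fin N, Complex.normSq (Matrix.mulVec Cm x k)
            = ∑ k : Fin N, ‖⟪v (k : ℕ), y⟫_ℂ‖ ^ 2 := by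
              refine Finset.sum_congr rfl fun k _ => ?_
              rw [h1 k, Complex.normSq_eq_norm_sq]
          _ = ∑ k ∈ Finset.range N, ‖⟪v k, y⟫_ℂ‖ ^ 2 :=
              Fin.sum_univ_eq_sum_range (fun k => ‖⟪v k, y⟫_ℂ‖ ^ 2) N
          _ ≤ ‖y‖ ^ 2 := hbes
          _ = ∑ i, Complex.normSq (x i) := hny
      have hBsum := sum_normSq_det_le_one Bm hBcond
      have hCsum0 := sum_normSq_det_le_one Cmᴴ hCcond
      have hCsum : ∑ m ∈ Finset.univ.filter (fun m : Fin n → Fin N => StrictMono m),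
          Complex.normSq (Matrix.det (Cm.submatrix m id)) ≤ 1 := by
        refine le_trans (le_of_eq (Finset.sum_congr rfl fun m _ => ?_)) hCsum0
        have heq : (Cmᴴ).submatrix id m = (Cm.submatrix m id)ᴴ := by
          ext i k; simp [Matrix.conjTranspose_apply]
        rw [heq, Matrix.det_conjTranspose, Complex.star_def, Complex.normSq_conj]
      -- combine
      set S := Finset.univ.filter (fun m : Fin n → Fin N => StrictMono m) with hS
      set b : (Fin n → Fin N) → ℝ := fun m => ‖Matrix.det (Bm.submatrix id m)‖ with hb
      set c : (Fin n → Fin N) → ℝ := fun m => ‖Matrix.det (Cm.submatrix m id)‖ with hc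
      have hbc : ∑ m ∈ S, b m * c m ≤ 1 := by
        have hcs := Finset.sum_mul_sq_le_sq_mul_sq S b c
        have hb2 : ∑ m ∈ S, b m ^ 2 ≤ 1 := by
          refine le_trans (le_of_eq (Finset.sum_congr rfl fun m _ => ?_)) hBsum
          rw [hb, Complex.sq_norm]
        have hc2 : ∑ m ∈ S, c m ^ 2 ≤ 1 := by
          refine le_trans (le_of_eq (Finset.sum_congr rfl fun m _ => ?_)) hCsum
          rw [hc, Complex.sq_norm]
        have hnn : 0 ≤ ∑ m ∈ S, b m * c m :=
          Finset.sum_nonneg fun m _ => mul_nonneg (norm_nonneg _) (norm_nonneg _)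
        have hb2nn : 0 ≤ ∑ m ∈ S, b m ^ 2 := Finset.sum_nonneg fun m _ => sq_nonneg _
        have hc2nn : 0 ≤ ∑ m ∈ S, c m ^ 2 := Finset.sum_nonneg fun m _ => sq_nonneg _
        nlinarith
      calc ‖(M N).det‖
          = ‖∑ m ∈ S, (∏ i, (s ((m i : ℕ)) : ℂ)) *
              (Matrix.det (Bm.submatrix id m) * Matrix.det (Cm.submatrix m id))‖ := by
            rw [hMN, cauchy_binet_weighted n N (fun k : Fin N => (s (k : ℕ) : ℂ)) Bm Cm]
        _ ≤ ∑ m ∈ S, ‖(∏ i, (s ((m i : ℕ)) : ℂ)) *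
              (Matrix.det (Bm.submatrix id m) * Matrix.det (Cm.submatrix m id))‖ :=
            norm_sum_le _ _
        _ ≤ ∑ m ∈ S, P * (b m * c m) := by
            refine Finset.sum_le_sum fun m hm => ?_
            have hmono : StrictMono m := (Finset.mem_filter.mp hm).2
            rw [norm_mul, norm_mul, norm_prod]
            have hpr : (∏ i, ‖((s ((m i : ℕ)) : ℂ))‖) ≤ P := by
              have h5 : (∏ i, ‖((s ((m i : ℕ)) : ℂ))‖) = ∏ i : Fin n, s ((m i : ℕ)) := by
                refine Finset.prod_congr rfl fun i _ => ?_
                rw [Complex.norm_real, Real.norm_eq_abs, abs_of_nonneg (hs_nonneg _)]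
              rw [h5, hP, ← Fin.prod_univ_eq_prod_range (fun j => s j) n]
              refine Finset.prod_le_prod (fun i _ => hs_nonneg _) fun i _ => ?_
              exact hs_anti (strictMono_fin_le hmono i)
            have hbcnn : 0 ≤ b m * c m :=
              mul_nonneg (norm_nonneg _) (norm_nonneg _)
            exact mul_le_mul_of_nonneg_right hpr hbcnn
        _ ≤ P := by
            have h7 : ∑ m ∈ S, P * (b m * c m) = P * ∑ m ∈ S, b m * c m := by
              simp [Finset.mul_sum]
            rw [h7]
            simpa using mul_le_mul_of_nonneg_left hbc hPnonneg
    have htendA : Filter.Tendsto M Filter.atTop (nhds A) := by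
      apply tendsto_pi_nhds.mpr
      intro i
      rw [tendsto_pi_nhds]
      intro j
      exact (hentry i j).tendsto_sum_nat
    have htendabs : Filter.Tendsto (fun N => ‖(M N).det‖) Filter.atTop
        (nhds ‖A.det‖) :=
      (continuous_norm.tendsto _).comp
        (((Continuous.matrix_det continuous_id).tendsto A).comp htendA)
    exact le_of_tendsto htendabs (Filter.Eventually.of_forall hbound)
end

section
/- Let $\beta_n = \exp(-\sqrt{n})$ and $S(\varepsilon) = \sum_{n=0}^\infty e^{-2n\varepsilon} e^{\sqrt{n}}$ for $\varepsilon > 0$. Then there exist constants $c, C > 0$ such that for all sufficiently small $\varepsilon > 0$: $c\, \varepsilon^{-3/2} \exp\big(\frac{1}{8\varepsilon}\big) \le S(\varepsilon) \le C\, \varepsilon^{-3/2} \exp\big(\frac{1}{8\varepsilon}\big)$. -/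
open Finset Real

private lemma sum_range_mul' (f : ℕ → ℝ) (J m : ℕ) :
    ∑ k ∈ Finset.range (J * m), f k
      = ∑ j ∈ Finset.range J, ∑ i ∈ Finset.range m, f (j * m + i) := by
  induction J with
  | zero => simp
  | succ J ih =>
      rw [Nat.succ_mul, Finset.sum_range_add, ih, Finset.sum_range_succ]

private lemma gauss_sum_le {γ : ℝ} (hγ : 0 < γ) (K : ℕ) :
    ∑ k ∈ Finset.range K, Real.exp (-(γ * (k : ℝ) ^ 2)) ≤ 2 / Real.sqrt γ + 2 := by
  have hsγ : 0 < Real.sqrt γ := Real.sqrt_pos.mpr hγ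
  set m : ℕ := ⌈1 / Real.sqrt γ⌉₊ with hm
  have hm0 : 0 < m := Nat.ceil_pos.mpr (by positivity)
  have hmle : (m : ℝ) ≤ 1 / Real.sqrt γ + 1 :=
    (Nat.ceil_lt_add_one (by positivity)).le
  have hγm2 : 1 ≤ γ * (m : ℝ) ^ 2 := by
    have h1 : 1 / Real.sqrt γ ≤ (m : ℝ) := Nat.le_ceil _
    have h2 : 1 ≤ Real.sqrt γ * m := by
      rw [div_le_iff₀ hsγ] at h1; linarith [h1]
    nlinarith [Real.sq_sqrt hγ.le, h2]
  calc ∑ k ∈ Finset.range K, Real.exp (-(γ * (k : ℝ) ^ 2))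
      ≤ ∑ k ∈ Finset.range (K * m), Real.exp (-(γ * (k : ℝ) ^ 2)) := by
        apply Finset.sum_le_sum_of_subset_of_nonneg
        · exact Finset.range_subset_range.mpr (Nat.le_mul_of_pos_right K hm0)
        · intro i _ _; positivity
    _ = ∑ j ∈ Finset.range K, ∑ i ∈ Finset.range m,
          Real.exp (-(γ * ((j * m + i : ℕ) : ℝ) ^ 2)) := sum_range_mul' _ K m
    _ ≤ ∑ j ∈ Finset.range K, ∑ i ∈ Finset.range m, Real.exp (-1) ^ j := by
        apply Finset.sum_le_sum; intro j _
        apply Finset.sum_le_sum; intro i _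
        rw [← Real.exp_nat_mul]
        apply Real.exp_le_exp.mpr
        have h1 : ((j * m : ℕ) : ℝ) ≤ ((j * m + i : ℕ) : ℝ) := by
          exact_mod_cast Nat.le_add_right _ _
        have h2 : (0 : ℝ) ≤ ((j * m : ℕ) : ℝ) := Nat.cast_nonneg _
        have h3 : ((j * m : ℕ) : ℝ) = (j : ℝ) * (m : ℝ) := by push_cast; ring
        have hjj : (j : ℝ) ≤ (j : ℝ) ^ 2 := by
          exact_mod_cast Nat.le_self_pow two_ne_zero j
        have h4 : (j : ℝ) ≤ (j : ℝ) ^ 2 * (γ * (m:ℝ)^2) := by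
          nlinarith [sq_nonneg (j:ℝ), hjj, hγm2]
        have h5 : (j:ℝ)^2*(m:ℝ)^2 ≤ ((j*m+i:ℕ):ℝ)^2 := by
          nlinarith [mul_self_le_mul_self h2 h1, h3]
        have h6 := mul_le_mul_of_nonneg_left h5 hγ.le
        linarith [h4, h6]
    _ = (m : ℝ) * ∑ j ∈ Finset.range K, Real.exp (-1) ^ j := by
        simp [Finset.sum_const, Finset.mul_sum]
    _ ≤ (m : ℝ) * 2 := by
        apply mul_le_mul_of_nonneg_left _ (Nat.cast_nonneg m)
        have hr0 : (0:ℝ) ≤ Real.exp (-1) := (Real.exp_pos _).le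
        have hr1 : Real.exp (-1) < 1 := Real.exp_lt_one_iff.mpr (by norm_num)
        have he : Real.exp (-1) ≤ 1/2 := by
          rw [Real.exp_neg, inv_le_comm₀ (Real.exp_pos 1) (by norm_num)]
          linarith [Real.add_one_le_exp (1:ℝ)]
        calc ∑ j ∈ Finset.range K, Real.exp (-1) ^ j
            ≤ ∑' j : ℕ, Real.exp (-1) ^ j :=
              Summable.sum_le_tsum _ (fun i _ => by positivity)
                (summable_geometric_of_lt_one hr0 hr1)
          _ = (1 - Real.exp (-1))⁻¹ := tsum_geometric_of_lt_one hr0 hr1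
          _ ≤ 2 := by
              rw [inv_le_comm₀ (by linarith) (by norm_num)]
              linarith
    _ ≤ 2 / Real.sqrt γ + 2 := by
        have : (m:ℝ) * 2 ≤ (1 / Real.sqrt γ + 1) * 2 := by linarith
        calc (m:ℝ) * 2 ≤ (1 / Real.sqrt γ + 1) * 2 := this
          _ = 2 / Real.sqrt γ + 2 := by ring

set_option maxHeartbeats 4000000 in
theorem stmt_14 :
    ∃ c C : ℝ, 0 < c ∧ 0 < C ∧ ∃ ε₀ : ℝ, 0 < ε₀ ∧
      ∀ ε : ℝ, 0 < ε → ε < ε₀ →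
        c * ε ^ (-(3 / 2) : ℝ) * Real.exp (1 / (8 * ε)) ≤
          (∑' n : ℕ, Real.exp (-2 * n * ε) * Real.exp (Real.sqrt n)) ∧
        (∑' n : ℕ, Real.exp (-2 * n * ε) * Real.exp (Real.sqrt n)) ≤
          C * ε ^ (-(3 / 2) : ℝ) * Real.exp (1 / (8 * ε)) := by
  refine ⟨Real.exp (-8) / 2, 10, by positivity, by norm_num, 1/64, by norm_num, ?_⟩
  intro ε hε hε64
  have hε1 : ε ≤ 1 := by linarith
  have hsε : 0 < Real.sqrt ε := Real.sqrt_pos.mpr hε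
  have hsε1 : Real.sqrt ε ≤ 1 := by
    rw [show (1:ℝ) = Real.sqrt 1 by simp]; exact Real.sqrt_le_sqrt hε1
  set E : ℝ := ε * Real.sqrt ε with hEdef
  have hE : 0 < E := by positivity
  have hE1 : E ≤ 1 := by nlinarith
  have hEinv1 : 1 ≤ E⁻¹ := by
    rw [le_inv_comm₀ (by norm_num) hE]; simpa using hE1
  have hrpow : ε ^ (-(3/2 : ℝ)) = E⁻¹ := by
    rw [show (-(3/2:ℝ)) = -(1 + 1/2) by norm_num, Real.rpow_neg hε.le,
      Real.rpow_add hε, Real.rpow_one, ← Real.sqrt_eq_rpow]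
  set a : ℝ := 1 / (4*ε) with hadef
  have ha : 0 < a := by positivity
  have ha1 : 1 ≤ a := by rw [hadef, le_div_iff₀ (by positivity)]; linarith
  set g : ℕ → ℝ := fun n => Real.exp (Real.sqrt n - 2*ε*n) with hgdef
  have hgeq : ∀ n : ℕ, Real.exp (-2*(n:ℝ)*ε) * Real.exp (Real.sqrt n) = g n := by
    intro n
    show _ = Real.exp (Real.sqrt n - 2*ε*n)
    rw [← Real.exp_add]; ring_nf
  have htsum_eq : (∑' n : ℕ, Real.exp (-2*(n:ℝ)*ε) * Real.exp (Real.sqrt n)) = ∑' n, g n :=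
    tsum_congr hgeq
  -- AM-GM
  have hamgm : ∀ n : ℕ, Real.sqrt n - 2*ε*n ≤ 1/(4*ε) - ε*n := by
    intro n
    have hs : Real.sqrt (n:ℝ) ^ 2 = (n:ℝ) := Real.sq_sqrt (Nat.cast_nonneg n)
    have hs' : 4*ε^2*(Real.sqrt n)^2 = 4*ε^2*(n:ℝ) := by rw [hs]
    have key : 4*ε*Real.sqrt n ≤ 4*ε^2*(n:ℝ) + 1 := by
      nlinarith [sq_nonneg (2*ε*Real.sqrt n - 1), hs']
    have h2 : ε*(n:ℝ) + 1/(4*ε) - Real.sqrt n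
        = (4*ε^2*(n:ℝ) + 1 - 4*ε*Real.sqrt n)/(4*ε) := by field_simp
    have h3 : (0:ℝ) ≤ ε*(n:ℝ) + 1/(4*ε) - Real.sqrt n := by
      rw [h2]; apply div_nonneg (by linarith) (by positivity)
    linarith
  have hsummg : Summable g := by
    have hr1 : Real.exp (-ε) < 1 := Real.exp_lt_one_iff.mpr (by linarith)
    apply Summable.of_nonneg_of_le (fun n => (Real.exp_pos _).le)
      (fun n => ?_)
      ((summable_geometric_of_lt_one (Real.exp_pos _).le hr1).mul_left
        (Real.exp (1/(4*ε))))
    calc g n ≤ Real.exp (1/(4*ε) - ε*n) := Real.exp_le_exp.mpr (hamgm n)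
      _ = Real.exp (1/(4*ε)) * Real.exp (-ε) ^ n := by
          rw [← Real.exp_nat_mul, ← Real.exp_add]; ring_nf
  -- key identity
  have hid : ∀ n : ℕ, g n
      = Real.exp (1/(8*ε)) * Real.exp (-(2*ε*(Real.sqrt n - a)^2)) := by
    intro n
    show Real.exp (Real.sqrt n - 2*ε*n) = _
    rw [← Real.exp_add]
    congr 1
    obtain ⟨s, hs0, hsn⟩ : ∃ s : ℝ, 0 ≤ s ∧ Real.sqrt (n:ℝ) = s :=
      ⟨_, Real.sqrt_nonneg _, rfl⟩
    have hs : s^2 = (n:ℝ) := by rw [← hsn]; exact Real.sq_sqrt (Nat.cast_nonneg n)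
    rw [hsn, ← hs, hadef]
    field_simp
    ring
  constructor
  · -- LOWER BOUND
    set n₁ : ℕ := ⌈a^2⌉₊ with hn₁def
    set Mf : ℕ := ⌊E⁻¹⌋₊ with hMfdef
    have hEinv2 : (2:ℝ) ≤ E⁻¹ := by
      have h2E : 2 * E ≤ 1 := by nlinarith
      have hEE : E * E⁻¹ = 1 := mul_inv_cancel₀ hE.ne'
      nlinarith [inv_pos.mpr hE]
    have hMf2 : 2 ≤ Mf := Nat.le_floor (by exact_mod_cast hEinv2)
    have hMfle : (Mf:ℝ) ≤ E⁻¹ := Nat.floor_le (by positivity)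
    have hMfge : E⁻¹ / 2 ≤ (Mf:ℝ) := by
      have := Nat.lt_floor_add_one E⁻¹
      linarith
    have hcard : (Finset.Icc n₁ (n₁ + (Mf - 1))).card = Mf := by
      rw [Nat.card_Icc]; omega
    have hterm : ∀ n ∈ Finset.Icc n₁ (n₁ + (Mf - 1)),
        Real.exp (1/(8*ε) - 8) ≤ g n := by
      intro n hn
      rw [Finset.mem_Icc] at hn
      obtain ⟨hnl, hnr⟩ := hn
      have hna : a^2 ≤ (n:ℝ) := by
        refine le_trans (Nat.le_ceil (a^2)) ?_
        exact_mod_cast hnl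
      have hnb : (n:ℝ) ≤ a^2 + E⁻¹ := by
        have h1 : (n:ℝ) ≤ (n₁:ℝ) + ((Mf-1:ℕ):ℝ) := by exact_mod_cast hnr
        have h2 : (n₁:ℝ) < a^2 + 1 := Nat.ceil_lt_add_one (by positivity)
        have h3 : ((Mf-1:ℕ):ℝ) = (Mf:ℝ) - 1 := by
          have h1' : 1 ≤ Mf := by omega
          push_cast [h1']; ring
        linarith
      rw [hid n]
      have hs2 : Real.sqrt (n:ℝ)^2 = (n:ℝ) := Real.sq_sqrt (Nat.cast_nonneg n)
      set s := Real.sqrt (n:ℝ) with hsdef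
      have hsa : a ≤ s := by
        rw [hsdef, show a = Real.sqrt (a^2) from (Real.sqrt_sq ha.le).symm]
        exact Real.sqrt_le_sqrt hna
      have hdiff : (s - a) * (s + a) = (n:ℝ) - a^2 := by linear_combination hs2
      have hd0 : (0:ℝ) ≤ s - a := by linarith
      have hdle : s - a ≤ E⁻¹ / (2*a) := by
        rw [le_div_iff₀ (by positivity)]
        calc (s-a)*(2*a) ≤ (s-a)*(s+a) := by nlinarith
          _ = (n:ℝ) - a^2 := hdiff
          _ ≤ E⁻¹ := by linarith
      have hEa : E⁻¹/(2*a) = 2/Real.sqrt ε := by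
        rw [hadef, hEdef]
        rw [mul_inv]
        field_simp
        nlinarith [Real.sq_sqrt hε.le]
      have hsq : 2*ε*(s-a)^2 ≤ 8 := by
        have h1 : (s-a)^2 ≤ (2/Real.sqrt ε)^2 := by
          apply pow_le_pow_left₀ hd0 (by rw [← hEa]; exact hdle)
        have h2 : (2/Real.sqrt ε)^2 = 4/ε := by
          rw [div_pow, Real.sq_sqrt hε.le]; norm_num
        have h3 : 2*ε*(4/ε) = 8 := by field_simp; ring
        nlinarith [h1, h2]
      rw [show 1/(8*ε) - 8 = 1/(8*ε) + (-8) by ring, Real.exp_add]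
      apply mul_le_mul_of_nonneg_left _ (Real.exp_pos _).le
      apply Real.exp_le_exp.mpr
      linarith
    have h1 := Finset.card_nsmul_le_sum _ _ _ hterm
    rw [hcard, nsmul_eq_mul] at h1
    have h2 : ∑ n ∈ Finset.Icc n₁ (n₁ + (Mf-1)), g n ≤ ∑' n, g n :=
      Summable.sum_le_tsum _ (fun i _ => (Real.exp_pos _).le) hsummg
    rw [htsum_eq, hrpow]
    have key : Real.exp (-8)/2 * E⁻¹ * Real.exp (1/(8*ε))
        ≤ (Mf:ℝ) * Real.exp (1/(8*ε) - 8) := by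
      rw [show 1/(8*ε) - 8 = 1/(8*ε) + (-8) by ring, Real.exp_add]
      have hmm := mul_le_mul_of_nonneg_right hMfge
        (mul_nonneg (Real.exp_pos (1/(8*ε))).le (Real.exp_pos (-8:ℝ)).le)
      nlinarith [hmm]
    linarith [key, h1, h2]
  · -- UPPER BOUND
    set N : ℕ := ⌈4*a^2⌉₊ with hNdef
    set n₀ : ℕ := ⌊a^2⌋₊ with hn₀def
    set γ : ℝ := 2*ε/(9*a^2) with hγdef
    have hγ : 0 < γ := by positivity
    have hNge : 4*a^2 ≤ (N:ℝ) := Nat.le_ceil _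
    have hNlt : (N:ℝ) < 4*a^2 + 1 := Nat.ceil_lt_add_one (by positivity)
    have hfl : (n₀:ℝ) ≤ a^2 := Nat.floor_le (by positivity)
    have hfl2 : a^2 < (n₀:ℝ) + 1 := Nat.lt_floor_add_one _
    -- per-term head bound
    have hhead1 : ∀ n ∈ Finset.range N,
        g n ≤ Real.exp (1/(8*ε)) * Real.exp (-(γ * ((n:ℝ) - a^2)^2)) := by
      intro n hn
      rw [Finset.mem_range] at hn
      rw [hid n]
      apply mul_le_mul_of_nonneg_left _ (Real.exp_pos _).le
      apply Real.exp_le_exp.mpr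
      have hs2 : Real.sqrt (n:ℝ)^2 = (n:ℝ) := Real.sq_sqrt (Nat.cast_nonneg n)
      set s := Real.sqrt (n:ℝ) with hsdef
      have hs0 : 0 ≤ s := Real.sqrt_nonneg _
      have hn4 : (n:ℝ) < 4*a^2 := by
        have : (n:ℝ) + 1 ≤ (N:ℝ) := by exact_mod_cast hn
        linarith
      have hs2a : s ≤ 2*a := by
        rw [hsdef, show 2*a = Real.sqrt ((2*a)^2) from (Real.sqrt_sq (by positivity)).symm]
        apply Real.sqrt_le_sqrt; nlinarith
      have hdiff : (s - a) * (s + a) = (n:ℝ) - a^2 := by linear_combination hs2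
      have hsum9 : (s+a)^2 ≤ 9*a^2 := by nlinarith
      have h9 : γ*(9*a^2) = 2*ε := by rw [hγdef]; field_simp
      have h10 := mul_le_mul_of_nonneg_left hsum9
        (mul_nonneg hγ.le (sq_nonneg (s-a)))
      rw [← hdiff]
      nlinarith [h10, h9, sq_nonneg (s-a)]
    have hn₀N : n₀ + 1 ≤ N := by
      have : (n₀:ℝ) + 1 < (N:ℝ) := by nlinarith
      exact_mod_cast this.le
    -- head
    have hA : ∑ n ∈ Finset.range N, g n
        ≤ Real.exp (1/(8*ε)) * ∑ n ∈ Finset.range N, Real.exp (-(γ*((n:ℝ)-a^2)^2)) := by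
      rw [Finset.mul_sum]; exact Finset.sum_le_sum hhead1
    have hsplit : ∑ n ∈ Finset.range N, Real.exp (-(γ*((n:ℝ)-a^2)^2))
        = ∑ n ∈ Finset.range (n₀+1), Real.exp (-(γ*((n:ℝ)-a^2)^2))
          + ∑ n ∈ Finset.Ico (n₀+1) N, Real.exp (-(γ*((n:ℝ)-a^2)^2)) := by
      rw [Finset.range_eq_Ico,
        ← Finset.sum_Ico_consecutive _ (Nat.zero_le (n₀+1)) hn₀N,
        ← Finset.range_eq_Ico]
    have hAle : ∑ n ∈ Finset.range (n₀+1), Real.exp (-(γ*((n:ℝ)-a^2)^2))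
        ≤ ∑ k ∈ Finset.range (n₀+1), Real.exp (-(γ*(k:ℝ)^2)) := by
      rw [← Finset.sum_range_reflect (fun k => Real.exp (-(γ*(k:ℝ)^2))) (n₀+1)]
      apply Finset.sum_le_sum
      intro j hj
      rw [Finset.mem_range] at hj
      have hj' : j ≤ n₀ := by omega
      have hc : ((n₀+1-1-j : ℕ):ℝ) = (n₀:ℝ) - (j:ℝ) := by
        have h : n₀+1-1-j = n₀ - j := by omega
        rw [h]; push_cast [hj']; ring
      rw [hc]
      apply Real.exp_le_exp.mpr
      apply neg_le_neg
      apply mul_le_mul_of_nonneg_left _ hγ.le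
      have h2 : (j:ℝ) ≤ (n₀:ℝ) := by exact_mod_cast hj'
      nlinarith
    have hBle : ∑ n ∈ Finset.Ico (n₀+1) N, Real.exp (-(γ*((n:ℝ)-a^2)^2))
        ≤ ∑ k ∈ Finset.range (N-(n₀+1)), Real.exp (-(γ*(k:ℝ)^2)) := by
      rw [Finset.sum_Ico_eq_sum_range]
      apply Finset.sum_le_sum
      intro k _
      have hc : ((n₀+1+k:ℕ):ℝ) = (n₀:ℝ)+1+(k:ℝ) := by push_cast; ring
      rw [hc]
      apply Real.exp_le_exp.mpr
      apply neg_le_neg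
      apply mul_le_mul_of_nonneg_left _ hγ.le
      have hk0 : (0:ℝ) ≤ (k:ℝ) := Nat.cast_nonneg _
      nlinarith
    have hgauss1 := gauss_sum_le hγ (n₀+1)
    have hgauss2 := gauss_sum_le hγ (N-(n₀+1))
    have hsγ : 0 < Real.sqrt γ := Real.sqrt_pos.mpr hγ
    have hγE : E ≤ Real.sqrt γ := by
      have hEsq : E^2 = ε^3 := by
        rw [hEdef, mul_pow, Real.sq_sqrt hε.le]; ring
      have hγval : ε^3 ≤ γ := by
        have hq : γ = 32*ε^3/9 := by
          rw [hγdef, hadef]; field_simp; ring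
        rw [hq]; nlinarith [pow_pos hε 3]
      rw [show E = Real.sqrt (E^2) from (Real.sqrt_sq hE.le).symm]
      apply Real.sqrt_le_sqrt; nlinarith
    have hfin : 4/Real.sqrt γ + 4 ≤ 8 * E⁻¹ := by
      have h1 : 1/Real.sqrt γ ≤ 1/E := one_div_le_one_div_of_le hE hγE
      have h2 : (1:ℝ) ≤ 1/E := by rw [one_div]; exact hEinv1
      have h3 : 8 * E⁻¹ = 4*(1/E) + 4*(1/E) := by rw [one_div]; ring
      have h4 : 4/Real.sqrt γ = 4*(1/Real.sqrt γ) := by ring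
      linarith
    have hheadfin : ∑ n ∈ Finset.range N, g n ≤ Real.exp (1/(8*ε)) * (8 * E⁻¹) := by
      refine le_trans hA ?_
      apply mul_le_mul_of_nonneg_left _ (Real.exp_pos _).le
      rw [hsplit]
      calc _ ≤ (2/Real.sqrt γ + 2) + (2/Real.sqrt γ + 2) := by
            exact add_le_add (le_trans hAle hgauss1) (le_trans hBle hgauss2)
        _ = 4/Real.sqrt γ + 4 := by ring
        _ ≤ 8 * E⁻¹ := hfin
    -- tail
    have hr0 : (0:ℝ) ≤ Real.exp (-ε) := (Real.exp_pos _).le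
    have hr1 : Real.exp (-ε) < 1 := Real.exp_lt_one_iff.mpr (by linarith)
    have htail : (∑' n : ℕ, g (n + N)) ≤ 2 * E⁻¹ := by
      have hsummN : Summable (fun n : ℕ => g (n + N)) :=
        (summable_nat_add_iff N).mpr hsummg
      have hq : Real.exp (1/(4*ε) - ε*N) ≤ 1 := by
        rw [Real.exp_le_one_iff]
        have h1 : ε*(4*a^2) = 1/(4*ε) := by rw [hadef]; field_simp
        nlinarith [hNge, hε]
      have hb : ∀ n : ℕ, g (n + N)
          ≤ Real.exp (1/(4*ε) - ε*(N:ℝ)) * Real.exp (-ε) ^ n := by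
        intro n
        have h1 := hamgm (n + N)
        have h2 : g (n+N) ≤ Real.exp (1/(4*ε) - ε*((n:ℝ)+(N:ℝ))) := by
          apply Real.exp_le_exp.mpr
          push_cast at h1 ⊢
          linarith
        refine le_trans h2 ?_
        rw [← Real.exp_nat_mul, ← Real.exp_add]
        apply Real.exp_le_exp.mpr
        ring_nf
        linarith
      calc (∑' n : ℕ, g (n+N))
          ≤ ∑' n : ℕ, Real.exp (1/(4*ε) - ε*(N:ℝ)) * Real.exp (-ε) ^ n :=
            Summable.tsum_le_tsum hb hsummN
              ((summable_geometric_of_lt_one hr0 hr1).mul_left _)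
        _ = Real.exp (1/(4*ε) - ε*(N:ℝ)) * (1 - Real.exp (-ε))⁻¹ := by
            rw [tsum_mul_left, tsum_geometric_of_lt_one hr0 hr1]
        _ ≤ 1 * (1 - Real.exp (-ε))⁻¹ := by
            exact mul_le_mul_of_nonneg_right hq (inv_nonneg.mpr (by linarith))
        _ ≤ 2 * E⁻¹ := by
            rw [one_mul]
            have hxe : Real.exp (-ε) ≤ 1/(1+ε) := by
              rw [Real.exp_neg, inv_le_comm₀ (Real.exp_pos ε) (by positivity),
                one_div, inv_inv]
              linarith [Real.add_one_le_exp ε]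
            have h1r : ε/2 ≤ 1 - Real.exp (-ε) := by
              have ha1 : ε/(1+ε) = 1 - 1/(1+ε) := by field_simp; ring
              have ha2 : ε/2 ≤ ε/(1+ε) := by
                rw [div_le_div_iff₀ (by norm_num) (by linarith)]
                nlinarith
              linarith [hxe]
            have h2 : (1 - Real.exp (-ε))⁻¹ ≤ 2/ε := by
              rw [inv_le_comm₀ (by linarith) (by positivity)]
              rw [show (2/ε)⁻¹ = ε/2 by rw [inv_div]]
              exact h1r
            have h3 : 2/ε ≤ 2*E⁻¹ := by
              have hEε : E ≤ ε := by nlinarith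
              have := one_div_le_one_div_of_le hE hEε
              rw [inv_eq_one_div]
              calc 2/ε = 2*(1/ε) := by ring
                _ ≤ 2*(1/E) := by linarith
            linarith
    -- combine
    have hsplitS : (∑' n, g n)
        = ∑ n ∈ Finset.range N, g n + ∑' n : ℕ, g (n + N) :=
      (Summable.sum_add_tsum_nat_add N hsummg).symm
    rw [htsum_eq, hrpow, hsplitS]
    have hone : (1:ℝ) ≤ Real.exp (1/(8*ε)) :=
      Real.one_le_exp (by positivity)
    have hEi : 0 < E⁻¹ := inv_pos.mpr hE
    calc ∑ n ∈ Finset.range N, g n + ∑' n : ℕ, g (n + N)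
        ≤ Real.exp (1/(8*ε)) * (8*E⁻¹) + 2*E⁻¹ := add_le_add hheadfin htail
      _ ≤ 10 * E⁻¹ * Real.exp (1/(8*ε)) := by nlinarith [hone, hEi]
end
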